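/- Let n ≥ 1, let ℓ be a positive integer, and let K ⊂ ℝⁿ be a compact convex set with K = -K and B(0, δ₁) ⊂ K ⊂ B(0, δ₂) for some 0 < δ₁ ≤ δ₂. Define I_K := |K|^{-1} χ_K, m_{ℓ,K}(x) := -(2/C(2ℓ,ℓ)) ∑_{j=1}^{ℓ} (-1)^j C(2ℓ, ℓ-j) Î_K(jx), and A_{ℓ,K}(x) := (4^ℓ/C(2ℓ,ℓ)) (1/|K|) ∫_K (sin((x·u)/2))^{2ℓ} du. Then m_{ℓ,K}(x) = 1 - A_{ℓ,K}(x) for all x ∈ ℝⁿ, and there exist positive constants C₁ and C₂, depending only on n, ℓ, δ₁, δ₂, such that C₁ |x|^{2ℓ} ≤ A_{ℓ,K}(x) ≤ C₂ |x|^{2ℓ} for all x ∈ ℝⁿ with |x| ≤ 4. -/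

import Mathlib

open MeasureTheory Metric Finset

/-- The Fourier transform `f̂(ξ) = ∫ f(x) e^{-i x·ξ} dx`. -/
noncomputable def FT {n : ℕ} (f : EuclideanSpace ℝ (Fin n) → ℂ)
    (ξ : EuclideanSpace ℝ (Fin n)) : ℂ :=
  ∫ x, Complex.exp (-(Complex.I * ((inner ℝ x ξ : ℝ) : ℂ))) * f x

/-- `I_K := |K|⁻¹ χ_K`, the normalized indicator of `K`. -/
noncomputable def indK {n : ℕ} (K : Set (EuclideanSpace ℝ (Fin n))) :
    EuclideanSpace ℝ (Fin n) → ℂ :=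
  K.indicator (fun _ => (((volume K).toReal : ℂ))⁻¹)

/-- `m_{ℓ,K}(x) := -(2/C(2ℓ,ℓ)) ∑_{j=1}^{ℓ} (-1)^j C(2ℓ,ℓ-j) Î_K(jx)`. -/
noncomputable def mK {n : ℕ} (ℓ : ℕ) (K : Set (EuclideanSpace ℝ (Fin n)))
    (x : EuclideanSpace ℝ (Fin n)) : ℂ :=
  -(2 / ((2 * ℓ).choose ℓ : ℂ)) *
    ∑ j ∈ Finset.Icc 1 ℓ, (-1 : ℂ) ^ j * ((2 * ℓ).choose (ℓ - j) : ℂ) * FT (indK K) ((j : ℝ) • x)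

/-- `A_{ℓ,K}(x) := (4^ℓ/C(2ℓ,ℓ)) (1/|K|) ∫_K (sin((x·u)/2))^{2ℓ} du`. -/
noncomputable def AK {n : ℕ} (ℓ : ℕ) (K : Set (EuclideanSpace ℝ (Fin n)))
    (x : EuclideanSpace ℝ (Fin n)) : ℝ :=
  ((4 : ℝ) ^ ℓ / ((2 * ℓ).choose ℓ : ℝ)) * ((volume K).toReal)⁻¹ *
    ∫ u in K, Real.sin ((inner ℝ x u : ℝ) / 2) ^ (2 * ℓ)

lemma sum_center {M : Type*} [AddCommMonoid M] (ℓ : ℕ) (f : ℕ → M) :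
    ∑ k ∈ range (2*ℓ+1), f k = f ℓ + ∑ j ∈ Icc 1 ℓ, (f (ℓ-j) + f (ℓ+j)) := by
  induction ℓ generalizing f with
  | zero => simp
  | succ m ih =>
    have h1 : 2*(m+1)+1 = (2*m+1) + 1 + 1 := by ring
    rw [h1, sum_range_succ, sum_range_succ', ih (fun k => f (k+1)),
      Finset.sum_Icc_succ_top (by omega : 1 ≤ m+1)]
    have h2 : ∑ j ∈ Icc 1 m, (f (m-j+1) + f (m+j+1))
        = ∑ j ∈ Icc 1 m, (f (m+1-j) + f (m+1+j)) := by
      refine Finset.sum_congr rfl fun j hj => ?_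
      have hj' : j ≤ m := (Finset.mem_Icc.mp hj).2
      have e1 : m - j + 1 = m + 1 - j := by omega
      have e2 : m + j + 1 = m + 1 + j := by omega
      rw [e1, e2]
    rw [h2]
    have e3 : m + 1 - (m+1) = 0 := by omega
    have e4 : m + 1 + (m+1) = 2*m+1+1 := by omega
    rw [e3, e4]
    abel

lemma negOnePow_eq {a b : ℕ} (h : (a+b) % 2 = 0) : (-1:ℂ)^a = (-1:ℂ)^b := by
  have h2 : (-1:ℂ)^(a+b) = 1 := Even.neg_one_pow ⟨(a+b)/2, by omega⟩
  have hb : (-1:ℂ)^b * (-1:ℂ)^b = 1 := by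
    rw [← pow_add]; exact Even.neg_one_pow ⟨b, rfl⟩
  calc (-1:ℂ)^a = (-1:ℂ)^a * ((-1:ℂ)^b * (-1:ℂ)^b) := by rw [hb, mul_one]
    _ = ((-1:ℂ)^(a+b)) * (-1:ℂ)^b := by rw [pow_add]; ring
    _ = (-1:ℂ)^b := by rw [h2, one_mul]

lemma keyC (ℓ : ℕ) (θ : ℝ) :
    (4:ℂ)^ℓ * Complex.sin θ ^ (2*ℓ)
      = ((2*ℓ).choose ℓ : ℂ)
        + ∑ j ∈ Icc 1 ℓ, (2 * (-1:ℂ)^j * ((2*ℓ).choose (ℓ-j) : ℂ))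
            * Complex.cos (2*j*θ) := by
  set z : ℂ := Complex.exp (θ * Complex.I) with hzdef
  have hz : z ≠ 0 := Complex.exp_ne_zero _
  set f : ℕ → ℂ := fun k => (-1:ℂ)^(ℓ+k) * ((2*ℓ).choose k : ℂ) * z ^ (2*((ℓ:ℤ) - k)) with hf
  have hinv : Complex.exp (-↑θ * Complex.I) = z⁻¹ := by
    rw [hzdef, ← Complex.exp_neg]; ring_nf
  have h2sin : (2 * Complex.sin θ) = (z⁻¹ + (-z)) * Complex.I := by
    rw [Complex.sin, hinv, hzdef]; ring
  have hstepA : (4:ℂ)^ℓ * Complex.sin θ ^ (2*ℓ) = ∑ k ∈ range (2*ℓ+1), f k := by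
    have e0 : (4:ℂ)^ℓ * Complex.sin θ ^ (2*ℓ) = (2*Complex.sin θ)^(2*ℓ) := by
      have h4 : (4:ℂ)^ℓ = 2^(2*ℓ) := by rw [pow_mul]; norm_num
      rw [mul_pow, h4]
    rw [e0, h2sin, mul_pow, add_pow]
    have hI : Complex.I ^ (2*ℓ) = (-1:ℂ)^ℓ := by
      rw [pow_mul, Complex.I_sq]
    rw [hI, sum_mul]
    refine Finset.sum_congr rfl fun k hk => ?_
    have hk' : k ≤ 2*ℓ := by
      have := Finset.mem_range.mp hk; omega
    have hnz : (-z)^(2*ℓ-k) = (-1:ℂ)^(2*ℓ-k) * z^(2*ℓ-k) := by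
      rw [neg_pow]
    have hzz : (z⁻¹)^k * z^(2*ℓ-k) = z ^ (2*((ℓ:ℤ) - k)) := by
      rw [inv_pow, ← zpow_natCast z k, ← zpow_natCast z (2*ℓ-k), ← zpow_neg,
        ← zpow_add₀ hz]
      congr 1
      push_cast [Nat.cast_sub hk']
      ring
    have hsgn : (-1:ℂ)^(2*ℓ-k) * (-1:ℂ)^ℓ = (-1:ℂ)^(ℓ+k) := by
      rw [← pow_add]
      exact negOnePow_eq (by omega)
    simp only [hf]
    calc (z⁻¹)^k * (-z)^(2*ℓ-k) * ((2*ℓ).choose k : ℂ) * (-1:ℂ)^ℓ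
        = ((-1:ℂ)^(2*ℓ-k) * (-1:ℂ)^ℓ) * ((2*ℓ).choose k : ℂ) * ((z⁻¹)^k * z^(2*ℓ-k)) := by
          rw [hnz]; ring
      _ = (-1:ℂ)^(ℓ+k) * ((2*ℓ).choose k : ℂ) * z ^ (2*((ℓ:ℤ) - k)) := by
          rw [hsgn, hzz]
  rw [hstepA, sum_center ℓ f]
  have hfℓ : f ℓ = ((2*ℓ).choose ℓ : ℂ) := by
    have hsg : (-1:ℂ)^(ℓ+ℓ) = (-1:ℂ)^(0:ℕ) := negOnePow_eq (by omega)
    simp only [hf, hsg]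
    simp
  rw [hfℓ]
  congr 1
  refine Finset.sum_congr rfl fun j hj => ?_
  obtain ⟨hj1, hj2⟩ := Finset.mem_Icc.mp hj
  have hzp : ∀ m : ℤ, z ^ m = Complex.exp (m * (θ * Complex.I)) := by
    intro m; rw [hzdef, ← Complex.exp_int_mul]
  have hcos : z ^ (2*(j:ℤ)) + z ^ (-(2*(j:ℤ))) = 2 * Complex.cos (2*j*θ) := by
    rw [hzp, hzp, Complex.cos]
    have a1 : ((2*(j:ℤ) : ℤ) : ℂ) * (θ * Complex.I) = (2*j*θ) * Complex.I := by
      push_cast; ring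
    have a2 : ((-(2*(j:ℤ)) : ℤ) : ℂ) * (θ * Complex.I) = (-(2*j*θ)) * Complex.I := by
      push_cast; ring
    rw [a1, a2]
    ring
  have e1 : f (ℓ - j) = (-1:ℂ)^j * ((2*ℓ).choose (ℓ-j) : ℂ) * z ^ (2*(j:ℤ)) := by
    have hsg : (-1:ℂ)^(ℓ + (ℓ - j)) = (-1:ℂ)^j := negOnePow_eq (by omega)
    have hexp : 2*((ℓ:ℤ) - ((ℓ - j : ℕ) : ℤ)) = 2*(j:ℤ) := by
      push_cast [Nat.cast_sub hj2]; ring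
    simp only [hf, hsg, hexp]
  have e2 : f (ℓ + j) = (-1:ℂ)^j * ((2*ℓ).choose (ℓ-j) : ℂ) * z ^ (-(2*(j:ℤ))) := by
    have hsg : (-1:ℂ)^(ℓ + (ℓ + j)) = (-1:ℂ)^j := negOnePow_eq (by omega)
    have hch : (2*ℓ).choose (ℓ+j) = (2*ℓ).choose (ℓ-j) := by
      rw [← Nat.choose_symm (by omega : ℓ+j ≤ 2*ℓ)]
      congr 1; omega
    have hexp : 2*((ℓ:ℤ) - ((ℓ + j : ℕ) : ℤ)) = -(2*(j:ℤ)) := by push_cast; ring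
    simp only [hf, hsg, hch, hexp]
  rw [e1, e2, ← mul_add, hcos]
  ring

lemma keyR (ℓ : ℕ) (θ : ℝ) :
    (4:ℝ)^ℓ * Real.sin θ ^ (2*ℓ)
      = ((2*ℓ).choose ℓ : ℝ)
        + ∑ j ∈ Icc 1 ℓ, (2 * (-1:ℝ)^j * ((2*ℓ).choose (ℓ-j) : ℝ))
            * Real.cos (2*j*θ) := by
  apply Complex.ofReal_injective
  push_cast [Complex.ofReal_sin, Complex.ofReal_cos]
  exact keyC ℓ θ

variable {n : ℕ} {K : Set (EuclideanSpace ℝ (Fin n))}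

lemma inner_cont (x : EuclideanSpace ℝ (Fin n)) :
    Continuous fun u : EuclideanSpace ℝ (Fin n) => (inner ℝ x u : ℝ) :=
  continuous_const.inner continuous_id

lemma ft_eq (hKc : IsCompact K) (y : EuclideanSpace ℝ (Fin n)) :
    FT (indK K) y
      = ((volume K).toReal : ℂ)⁻¹ *
          ∫ u in K, Complex.exp (-(Complex.I * ((inner ℝ u y : ℝ) : ℂ))) := by
  unfold FT indK
  have h : (fun x => Complex.exp (-(Complex.I * ((inner ℝ x y : ℝ) : ℂ))) *
      K.indicator (fun _ => (((volume K).toReal : ℂ))⁻¹) x)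
      = K.indicator (fun x =>
          Complex.exp (-(Complex.I * ((inner ℝ x y : ℝ) : ℂ))) * ((volume K).toReal : ℂ)⁻¹) := by
    ext x
    by_cases hx : x ∈ K <;>
      simp [Set.indicator_of_mem, Set.indicator_of_notMem, hx]
  rw [h, integral_indicator hKc.measurableSet, integral_mul_const, mul_comm]

lemma sin_int_zero (hKc : IsCompact K) (hsym : -K = K)
    (c : ℝ) (x : EuclideanSpace ℝ (Fin n)) :
    (∫ u in K, Real.sin (c * (inner ℝ x u : ℝ))) = 0 := by
  set g : EuclideanSpace ℝ (Fin n) → ℝ := fun u => Real.sin (c * (inner ℝ x u : ℝ)) with hg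
  have h2 : ∫ u in K, g u = ∫ u, K.indicator g u :=
    (integral_indicator hKc.measurableSet).symm
  have h3 : ∫ u, K.indicator g u = ∫ u, K.indicator g (-u) :=
    (integral_neg_eq_self (fun u => K.indicator g u) volume).symm
  have h4 : ∀ u, K.indicator g (-u) = - K.indicator g u := by
    intro u
    by_cases hu : u ∈ K
    · have hu' : -u ∈ K := by
        rw [← hsym]; simpa [Set.mem_neg] using hu
      rw [Set.indicator_of_mem hu', Set.indicator_of_mem hu]
      show Real.sin (c * (inner ℝ x (-u) : ℝ)) = -Real.sin (c * (inner ℝ x u : ℝ))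
      rw [inner_neg_right, mul_neg, Real.sin_neg]
    · have hu' : -u ∉ K := by
        rw [← hsym]; simpa [Set.mem_neg] using hu
      rw [Set.indicator_of_notMem hu', Set.indicator_of_notMem hu, neg_zero]
  have h5 : ∫ u, K.indicator g (-u) = - ∫ u, K.indicator g u := by
    simp_rw [h4]; exact integral_neg _
  have h6 := h2.trans (h3.trans h5)
  linarith [h6, h2]

lemma cos_int (hKc : IsCompact K) (hsym : -K = K)
    (c : ℝ) (x : EuclideanSpace ℝ (Fin n)) :
    (∫ u in K, Complex.exp (-(Complex.I * ((c * (inner ℝ x u : ℝ) : ℝ) : ℂ))))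
      = ((∫ u in K, Real.cos (c * (inner ℝ x u : ℝ)) : ℝ) : ℂ) := by
  have h1 : ∀ u : EuclideanSpace ℝ (Fin n),
      Complex.exp (-(Complex.I * ((c * (inner ℝ x u : ℝ) : ℝ) : ℂ)))
        = ((Real.cos (c * (inner ℝ x u : ℝ)) : ℂ))
          - ((Real.sin (c * (inner ℝ x u : ℝ)) : ℂ)) * Complex.I := by
    intro u
    set t : ℝ := c * (inner ℝ x u : ℝ)
    have : -(Complex.I * (t : ℂ)) = ((-t : ℝ) : ℂ) * Complex.I := by push_cast; ring
    rw [this, Complex.exp_mul_I]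
    rw [← Complex.ofReal_cos, ← Complex.ofReal_sin, Real.cos_neg, Real.sin_neg]
    push_cast
    ring
  simp_rw [h1]
  have hic : IntegrableOn (fun u : EuclideanSpace ℝ (Fin n) =>
      ((Real.cos (c * (inner ℝ x u : ℝ)) : ℂ))) K volume := by
    apply ContinuousOn.integrableOn_compact hKc
    exact (Complex.continuous_ofReal.comp
      (Real.continuous_cos.comp ((continuous_const.mul (inner_cont x))))).continuousOn
  have his : IntegrableOn (fun u : EuclideanSpace ℝ (Fin n) =>
      ((Real.sin (c * (inner ℝ x u : ℝ)) : ℂ)) * Complex.I) K volume := by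
    apply ContinuousOn.integrableOn_compact hKc
    exact ((Complex.continuous_ofReal.comp
      (Real.continuous_sin.comp ((continuous_const.mul (inner_cont x))))).mul
        continuous_const).continuousOn
  rw [integral_sub hic his, integral_mul_const]
  have hreC : ∀ g : EuclideanSpace ℝ (Fin n) → ℝ,
      (∫ u in K, ((g u : ℝ) : ℂ)) = ((∫ u in K, g u : ℝ) : ℂ) := by
    intro g
    exact (integral_ofReal (𝕜 := ℂ))
  rw [hreC, hreC, sin_int_zero hKc hsym c x]
  simp

lemma part1 {n : ℕ} {K : Set (EuclideanSpace ℝ (Fin n))} (hKc : IsCompact K)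
    (hsym : -K = K) (hvol : (volume K).toReal ≠ 0) (ℓ : ℕ)
    (x : EuclideanSpace ℝ (Fin n)) :
    mK ℓ K x = 1 - ((AK ℓ K x : ℝ) : ℂ) := by
  set v : ℝ := (volume K).toReal with hv
  set Ij : ℕ → ℝ := fun j => ∫ u in K, Real.cos ((j : ℝ) * (inner ℝ x u : ℝ)) with hIj
  set S : ℝ := ∑ j ∈ Finset.Icc 1 ℓ, (-1:ℝ)^j * ((2*ℓ).choose (ℓ-j) : ℝ) * Ij j with hS
  have hCc : ((2*ℓ).choose ℓ : ℝ) ≠ 0 := by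
    exact_mod_cast (Nat.choose_pos (by omega : ℓ ≤ 2*ℓ)).ne'
  -- Fourier transform values
  have hFT : ∀ j ∈ Finset.Icc 1 ℓ, FT (indK K) ((j:ℝ) • x)
      = ((v⁻¹ * Ij j : ℝ) : ℂ) := by
    intro j _
    rw [ft_eq hKc]
    have harg : ∀ u : EuclideanSpace ℝ (Fin n),
        (inner ℝ u ((j:ℝ) • x) : ℝ) = (j:ℝ) * (inner ℝ x u : ℝ) := by
      intro u
      rw [real_inner_smul_right, real_inner_comm]
    simp_rw [harg]
    rw [cos_int hKc hsym ((j:ℝ)) x]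
    push_cast
    ring
  have hm : mK ℓ K x = ((-(2/((2*ℓ).choose ℓ : ℝ)) * v⁻¹ * S : ℝ) : ℂ) := by
    unfold mK
    have hsum : ∑ j ∈ Finset.Icc 1 ℓ, (-1 : ℂ) ^ j * ((2 * ℓ).choose (ℓ - j) : ℂ) * FT (indK K) ((j : ℝ) • x)
        = ∑ j ∈ Finset.Icc 1 ℓ, (-1 : ℂ) ^ j * ((2 * ℓ).choose (ℓ - j) : ℂ) * ((v⁻¹ * Ij j : ℝ) : ℂ) :=
      Finset.sum_congr rfl (fun j hj => by rw [hFT j hj])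
    rw [hsum]
    push_cast [hS]
    rw [Finset.mul_sum, Finset.mul_sum]
    exact Finset.sum_congr rfl fun j _ => by ring
  -- pointwise expansion
  have hpt : ∀ u : EuclideanSpace ℝ (Fin n),
      (4:ℝ)^ℓ * Real.sin ((inner ℝ x u : ℝ)/2) ^ (2*ℓ)
        = ((2*ℓ).choose ℓ : ℝ)
          + ∑ j ∈ Finset.Icc 1 ℓ, (2 * (-1:ℝ)^j * ((2*ℓ).choose (ℓ-j) : ℝ))
              * Real.cos ((j:ℝ) * (inner ℝ x u : ℝ)) := by
    intro u
    rw [keyR ℓ ((inner ℝ x u : ℝ)/2)]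
    congr 1
    refine Finset.sum_congr rfl fun j _ => ?_
    congr 1
    ring
  have hIcont : ∀ j : ℕ, IntegrableOn (fun u : EuclideanSpace ℝ (Fin n) =>
      (2 * (-1:ℝ)^j * ((2*ℓ).choose (ℓ-j) : ℝ)) * Real.cos ((j:ℝ) * (inner ℝ x u : ℝ))) K volume := by
    intro j
    apply ContinuousOn.integrableOn_compact hKc
    exact (continuous_const.mul (Real.continuous_cos.comp
      (continuous_const.mul (inner_cont x)))).continuousOn
  have hint : ∫ u in K, (4:ℝ)^ℓ * Real.sin ((inner ℝ x u : ℝ)/2) ^ (2*ℓ)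
      = ((2*ℓ).choose ℓ : ℝ) * v + 2 * S := by
    simp_rw [hpt]
    rw [integral_add (integrableOn_const (C := ((2*ℓ).choose ℓ : ℝ)) hKc.measure_lt_top.ne)
      (integrable_finset_sum _ (fun j _ => hIcont j)),
      integral_finset_sum _ (fun j _ => hIcont j), setIntegral_const]
    simp_rw [integral_const_mul]
    rw [hS, Finset.mul_sum]
    have : ∑ j ∈ Finset.Icc 1 ℓ, (2 * (-1:ℝ)^j * ((2*ℓ).choose (ℓ-j) : ℝ)) * Ij j
        = ∑ j ∈ Finset.Icc 1 ℓ, 2 * ((-1:ℝ)^j * ((2*ℓ).choose (ℓ-j) : ℝ) * Ij j) := by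
      exact Finset.sum_congr rfl fun j _ => by ring
    rw [this]
    simp [smul_eq_mul, mul_comm, Measure.real, hv]
  have hA : AK ℓ K x = 1 + (2/((2*ℓ).choose ℓ : ℝ)) * v⁻¹ * S := by
    have h4 : (4:ℝ)^ℓ ≠ 0 := by positivity
    have h2 : (4:ℝ)^ℓ * ∫ u in K, Real.sin ((inner ℝ x u : ℝ)/2) ^ (2*ℓ)
        = ((2*ℓ).choose ℓ : ℝ) * v + 2 * S := by
      rw [← MeasureTheory.integral_const_mul]; exact hint
    unfold AK
    rw [← hv]
    have h3 : (4:ℝ)^ℓ / ((2*ℓ).choose ℓ : ℝ) * v⁻¹ *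
        ∫ u in K, Real.sin ((inner ℝ x u : ℝ)/2) ^ (2*ℓ)
        = ((4:ℝ)^ℓ * ∫ u in K, Real.sin ((inner ℝ x u : ℝ)/2) ^ (2*ℓ))
            / ((2*ℓ).choose ℓ : ℝ) * v⁻¹ := by ring
    rw [h3, h2]
    field_simp
  rw [hm, hA]
  push_cast
  ring

lemma sin_pow_nonneg (ℓ : ℕ) (a : ℝ) : 0 ≤ Real.sin a ^ (2*ℓ) := by
  rw [pow_mul]; exact pow_nonneg (sq_nonneg _) ℓ


/-- Let `n ≥ 1`, `ℓ ≥ 1`, `0 < δ₁ ≤ δ₂`.  For every compact symmetric convex set `K`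
with `B(0,δ₁) ⊆ K ⊆ B(0,δ₂)` one has `m_{ℓ,K}(x) = 1 - A_{ℓ,K}(x)` for all `x`, and
there are positive constants `C₁, C₂` depending only on `n, ℓ, δ₁, δ₂` such that
`C₁ |x|^{2ℓ} ≤ A_{ℓ,K}(x) ≤ C₂ |x|^{2ℓ}` whenever `|x| ≤ 4`. -/
theorem stmt19 (n : ℕ) (hn : 1 ≤ n) (ℓ : ℕ) (hℓ : 0 < ℓ)
    (δ₁ δ₂ : ℝ) (hδ₁ : 0 < δ₁) (hδ : δ₁ ≤ δ₂) :
    (∀ K : Set (EuclideanSpace ℝ (Fin n)), IsCompact K → Convex ℝ K → -K = K →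
        ball (0 : EuclideanSpace ℝ (Fin n)) δ₁ ⊆ K →
        K ⊆ ball (0 : EuclideanSpace ℝ (Fin n)) δ₂ →
      ∀ x : EuclideanSpace ℝ (Fin n), mK ℓ K x = 1 - ((AK ℓ K x : ℝ) : ℂ)) ∧
    ∃ C₁ C₂ : ℝ, 0 < C₁ ∧ 0 < C₂ ∧
      ∀ K : Set (EuclideanSpace ℝ (Fin n)), IsCompact K → Convex ℝ K → -K = K →
        ball (0 : EuclideanSpace ℝ (Fin n)) δ₁ ⊆ K →
        K ⊆ ball (0 : EuclideanSpace ℝ (Fin n)) δ₂ →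
      ∀ x : EuclideanSpace ℝ (Fin n), ‖x‖ ≤ 4 →
        C₁ * ‖x‖ ^ (2 * ℓ) ≤ AK ℓ K x ∧ AK ℓ K x ≤ C₂ * ‖x‖ ^ (2 * ℓ) := by

  have hδ₂ : 0 < δ₂ := lt_of_lt_of_le hδ₁ hδ
  have hCc : (0:ℝ) < ((2*ℓ).choose ℓ : ℝ) := by
    exact_mod_cast Nat.choose_pos (by omega : ℓ ≤ 2*ℓ)
  have hvolK : ∀ K : Set (EuclideanSpace ℝ (Fin n)), IsCompact K →
      ball (0 : EuclideanSpace ℝ (Fin n)) δ₁ ⊆ K → 0 < (volume K).toReal := by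
    intro K hKc hK1
    refine ENNReal.toReal_pos ?_ hKc.measure_lt_top.ne
    have := measure_ball_pos volume (0 : EuclideanSpace ℝ (Fin n)) hδ₁
    exact (this.trans_le (measure_mono hK1)).ne'
  constructor
  · intro K hKc _ hsym hK1 _ x
    exact part1 hKc hsym (hvolK K hKc hK1).ne' ℓ x
  -- Part 2
  have hπ : (0:ℝ) < Real.pi := Real.pi_pos
  set r : ℝ := min δ₁ (1/2) with hrdef
  have hr : 0 < r := lt_min hδ₁ (by norm_num)
  have hr2 : r ≤ 1/2 := min_le_right _ _
  have hrδ : r ≤ δ₁ := min_le_left _ _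
  set b₀ : ℝ := (volume (ball (0 : EuclideanSpace ℝ (Fin n)) (r/8))).toReal with hb₀def
  have hb₀ : 0 < b₀ := by
    refine ENNReal.toReal_pos ?_ measure_ball_lt_top.ne
    exact (measure_ball_pos volume _ (by positivity : (0:ℝ) < r/8)).ne'
  set vB : ℝ := (volume (ball (0 : EuclideanSpace ℝ (Fin n)) δ₂)).toReal with hvBdef
  have hvB : 0 < vB := by
    refine ENNReal.toReal_pos ?_ measure_ball_lt_top.ne
    exact (measure_ball_pos volume _ hδ₂).ne'
  set c₁ : ℝ := 5*r/(8*Real.pi) with hc₁def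
  have hc₁ : 0 < c₁ := by positivity
  refine ⟨(4:ℝ)^ℓ/((2*ℓ).choose ℓ : ℝ) * vB⁻¹ * b₀ * c₁^(2*ℓ),
          (4:ℝ)^ℓ/((2*ℓ).choose ℓ : ℝ) * (δ₂/2)^(2*ℓ), by positivity, by positivity,
          ?_⟩
  intro K hKc _ hsym hK1 hK2 x hx4
  set v : ℝ := (volume K).toReal with hvdef
  have hv0 : 0 < v := hvolK K hKc hK1
  have hvvB : v ≤ vB := by
    rw [hvdef, hvBdef]
    exact ENNReal.toReal_mono measure_ball_lt_top.ne (measure_mono hK2)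
  have hSintble : IntegrableOn
      (fun u : EuclideanSpace ℝ (Fin n) => Real.sin ((inner ℝ x u : ℝ)/2) ^ (2*ℓ)) K volume := by
    apply ContinuousOn.integrableOn_compact hKc
    exact ((Real.continuous_sin.comp ((inner_cont x).div_const 2)).pow (2*ℓ)).continuousOn
  set Sint : ℝ := ∫ u in K, Real.sin ((inner ℝ x u : ℝ)/2) ^ (2*ℓ) with hSintdef
  have hAeq : AK ℓ K x = (4:ℝ)^ℓ/((2*ℓ).choose ℓ : ℝ) * v⁻¹ * Sint := rfl
  -- upper bound
  have hup_pt : ∀ u ∈ K, Real.sin ((inner ℝ x u : ℝ)/2) ^ (2*ℓ) ≤ ((δ₂/2)*‖x‖)^(2*ℓ) := by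
    intro u hu
    have hu2 : ‖u‖ ≤ δ₂ := le_of_lt (mem_ball_zero_iff.mp (hK2 hu))
    have habs : |Real.sin ((inner ℝ x u : ℝ)/2)| ≤ (δ₂/2)*‖x‖ := by
      refine (Real.abs_sin_le_abs).trans ?_
      rw [abs_div]
      have h1 : |(inner ℝ x u : ℝ)| ≤ ‖x‖ * δ₂ := by
        refine (abs_real_inner_le_norm x u).trans ?_
        exact mul_le_mul_of_nonneg_left hu2 (norm_nonneg x)
      rw [show |(2:ℝ)| = 2 by norm_num]
      linarith
    calc Real.sin ((inner ℝ x u : ℝ)/2) ^ (2*ℓ)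
        = |Real.sin ((inner ℝ x u : ℝ)/2)| ^ (2*ℓ) := by
          rw [pow_abs, abs_of_nonneg (sin_pow_nonneg ℓ _)]
      _ ≤ ((δ₂/2)*‖x‖)^(2*ℓ) := pow_le_pow_left₀ (abs_nonneg _) habs _
  have hup : Sint ≤ v * ((δ₂/2)*‖x‖)^(2*ℓ) := by
    have := setIntegral_mono_on hSintble
      (integrableOn_const hKc.measure_lt_top.ne) hKc.measurableSet hup_pt
    rwa [setIntegral_const, smul_eq_mul] at this
  have hupper : AK ℓ K x ≤ (4:ℝ)^ℓ/((2*ℓ).choose ℓ : ℝ) * (δ₂/2)^(2*ℓ) * ‖x‖ ^ (2*ℓ) := by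
    rw [hAeq]
    have h1 : v⁻¹ * Sint ≤ ((δ₂/2)*‖x‖)^(2*ℓ) := by
      rw [inv_mul_le_iff₀ hv0]
      exact hup
    calc (4:ℝ)^ℓ/((2*ℓ).choose ℓ : ℝ) * v⁻¹ * Sint
        = (4:ℝ)^ℓ/((2*ℓ).choose ℓ : ℝ) * (v⁻¹ * Sint) := by ring
      _ ≤ (4:ℝ)^ℓ/((2*ℓ).choose ℓ : ℝ) * ((δ₂/2)*‖x‖)^(2*ℓ) := by
          exact mul_le_mul_of_nonneg_left h1 (by positivity)
      _ = (4:ℝ)^ℓ/((2*ℓ).choose ℓ : ℝ) * (δ₂/2)^(2*ℓ) * ‖x‖ ^ (2*ℓ) := by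
          rw [mul_pow]; ring
  -- lower bound
  have hlower : (4:ℝ)^ℓ/((2*ℓ).choose ℓ : ℝ) * vB⁻¹ * b₀ * c₁^(2*ℓ) * ‖x‖ ^ (2*ℓ)
      ≤ AK ℓ K x := by
    by_cases hx0 : x = 0
    · subst hx0
      have hz : Sint = 0 := by
        rw [hSintdef]
        have : ∀ u : EuclideanSpace ℝ (Fin n),
            Real.sin ((inner ℝ (0 : EuclideanSpace ℝ (Fin n)) u : ℝ)/2) ^ (2*ℓ) = 0 := by
          intro u
          rw [inner_zero_left]
          norm_num
          omega
        simp_rw [this]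
        simp
      rw [hAeq, hz, norm_zero, zero_pow (by omega : 2*ℓ ≠ 0)]
      simp
    · have hxn : 0 < ‖x‖ := norm_pos_iff.mpr hx0
      set e : EuclideanSpace ℝ (Fin n) := ‖x‖⁻¹ • x with hedef
      have he : ‖e‖ = 1 := norm_smul_inv_norm hx0
      have hxe : ∀ u : EuclideanSpace ℝ (Fin n), (inner ℝ x u : ℝ) = ‖x‖ * (inner ℝ e u : ℝ) := by
        intro u
        rw [hedef, real_inner_smul_left]
        field_simp
      set B : Set (EuclideanSpace ℝ (Fin n)) := ball ((3*r/4) • e) (r/8) with hBdef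
      have hnormB : ∀ u ∈ B, ‖u‖ < 7*r/8 := by
        intro u hu
        have h1 : ‖u - (3*r/4) • e‖ < r/8 := mem_ball_iff_norm.mp hu
        have h2 : ‖(3*r/4) • e‖ = 3*r/4 := by
          rw [norm_smul, he, mul_one, Real.norm_eq_abs, abs_of_nonneg (by positivity)]
        calc ‖u‖ = ‖(u - (3*r/4) • e) + (3*r/4) • e‖ := by rw [sub_add_cancel]
          _ ≤ ‖u - (3*r/4) • e‖ + ‖(3*r/4) • e‖ := norm_add_le _ _
          _ < r/8 + 3*r/4 := by rw [h2]; linarith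
          _ = 7*r/8 := by ring
      have hBK : B ⊆ K := by
        intro u hu
        apply hK1
        rw [mem_ball_zero_iff]
        have := hnormB u hu
        linarith [hr, hrδ]
      have hinner_lo : ∀ u ∈ B, 5*r/8 ≤ (inner ℝ e u : ℝ) := by
        intro u hu
        have h1 : ‖u - (3*r/4) • e‖ < r/8 := mem_ball_iff_norm.mp hu
        have h2 : (inner ℝ e u : ℝ) = (inner ℝ e (u - (3*r/4) • e) : ℝ) + 3*r/4 := by
          rw [inner_sub_right, real_inner_smul_right, real_inner_self_eq_norm_sq, he]
          ring
        have h3 : |(inner ℝ e (u - (3*r/4) • e) : ℝ)| ≤ ‖u - (3*r/4) • e‖ := by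
          have := abs_real_inner_le_norm e (u - (3*r/4) • e)
          rwa [he, one_mul] at this
        have h4 : -(r/8) ≤ (inner ℝ e (u - (3*r/4) • e) : ℝ) := by
          have := (abs_le.mp (h3.trans h1.le)).1
          linarith
        linarith
      have hlow_pt : ∀ u ∈ B, (c₁*‖x‖)^(2*ℓ) ≤ Real.sin ((inner ℝ x u : ℝ)/2) ^ (2*ℓ) := by
        intro u hu
        have hlo := hinner_lo u hu
        have hhi : (inner ℝ e u : ℝ) ≤ 7*r/8 := by
          have h1 : (inner ℝ e u : ℝ) ≤ ‖u‖ := by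
            have := real_inner_le_norm e u
            rwa [he, one_mul] at this
          exact h1.trans (hnormB u hu).le
        set t : ℝ := (inner ℝ x u : ℝ)/2 with htdef
        have ht : t = ‖x‖ * (inner ℝ e u : ℝ) / 2 := by rw [htdef, hxe u]
        have ht0 : 0 ≤ t := by
          rw [ht]
          have : (0:ℝ) ≤ (inner ℝ e u : ℝ) := by linarith [hr]
          positivity
        have htπ : t ≤ Real.pi/2 := by
          have h1 : t ≤ 4 * (7*r/8) / 2 := by
            rw [ht]
            have := mul_le_mul hx4 hhi (by linarith [hr]) (by norm_num)
            linarith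
          have h2 : Real.pi > 3 := Real.pi_gt_three
          -- t ≤ 7r/4 ≤ 7/8 < 3/2 < π/2
          have h3 : t ≤ 7/8 := by
            have h4 : 4 * (7*r/8) / 2 = 7*r/4 := by ring
            rw [h4] at h1
            linarith [hr2]
          linarith
        have hjordan : 2/Real.pi * t ≤ Real.sin t := Real.mul_le_sin ht0 htπ
        have hcx : c₁ * ‖x‖ ≤ 2/Real.pi * t := by
          have hmul : (5*r/8) * ‖x‖ ≤ (inner ℝ e u : ℝ) * ‖x‖ :=
            mul_le_mul_of_nonneg_right hlo (norm_nonneg x)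
          have he1 : c₁*‖x‖ = ((5*r/8) * ‖x‖)/Real.pi := by rw [hc₁def]; ring
          have he2 : 2/Real.pi * t = ((inner ℝ e u : ℝ) * ‖x‖)/Real.pi := by
            rw [ht]; ring
          rw [he1, he2]
          gcongr
        have hcx0 : 0 ≤ c₁ * ‖x‖ := by positivity
        calc (c₁*‖x‖)^(2*ℓ) ≤ (2/Real.pi * t)^(2*ℓ) := pow_le_pow_left₀ hcx0 hcx _
          _ ≤ Real.sin t ^ (2*ℓ) := by
              refine pow_le_pow_left₀ (by positivity) hjordan _
      have hlowint : b₀ * (c₁*‖x‖)^(2*ℓ) ≤ Sint := by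
        have h1 : ∫ u in B, (c₁*‖x‖)^(2*ℓ)
            ≤ ∫ u in B, Real.sin ((inner ℝ x u : ℝ)/2) ^ (2*ℓ) := by
          refine setIntegral_mono_on
            (integrableOn_const measure_ball_lt_top.ne)
            (hSintble.mono_set hBK) measurableSet_ball hlow_pt
        have h2 : ∫ u in B, Real.sin ((inner ℝ x u : ℝ)/2) ^ (2*ℓ) ≤ Sint := by
          refine setIntegral_mono_set hSintble
            (Filter.Eventually.of_forall (fun u => sin_pow_nonneg ℓ _)) ?_
          exact Filter.Eventually.of_forall (fun u hu => hBK hu)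
        have h3 : ∫ u in B, ((c₁*‖x‖)^(2*ℓ) : ℝ) = b₀ * (c₁*‖x‖)^(2*ℓ) := by
          rw [setIntegral_const, smul_eq_mul, hBdef]
          congr 1
          rw [hb₀def]
          exact congrArg ENNReal.toReal (Measure.addHaar_ball_center (volume : Measure (EuclideanSpace ℝ (Fin n))) _ _)
        linarith
      rw [hAeq]
      have hinv : vB⁻¹ ≤ v⁻¹ := inv_anti₀ hv0 hvvB
      calc (4:ℝ)^ℓ/((2*ℓ).choose ℓ : ℝ) * vB⁻¹ * b₀ * c₁^(2*ℓ) * ‖x‖ ^ (2*ℓ)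
          = (4:ℝ)^ℓ/((2*ℓ).choose ℓ : ℝ) * vB⁻¹ * (b₀ * (c₁*‖x‖)^(2*ℓ)) := by
            rw [mul_pow]; ring
        _ ≤ (4:ℝ)^ℓ/((2*ℓ).choose ℓ : ℝ) * v⁻¹ * (b₀ * (c₁*‖x‖)^(2*ℓ)) := by
            have hnn : (0:ℝ) ≤ b₀ * (c₁*‖x‖)^(2*ℓ) := by positivity
            have := mul_le_mul_of_nonneg_left hinv (by positivity :
              (0:ℝ) ≤ (4:ℝ)^ℓ/((2*ℓ).choose ℓ : ℝ))
            exact mul_le_mul_of_nonneg_right this hnn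
        _ ≤ (4:ℝ)^ℓ/((2*ℓ).choose ℓ : ℝ) * v⁻¹ * Sint := by
            exact mul_le_mul_of_nonneg_left hlowint (by positivity)
  exact ⟨hlower, hupper⟩
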